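/- (Double-crossing method, special case: the core identity of Theorem 3/4.) Let K be a field, let n ≥ 3, and let A be an n×n matrix over K. Suppose the 'double-crossed' contiguous minor α = det(A_{1..n−2, 2..n−1}) is nonzero. Let m(r,c) denote the (r,c) minor of A. Then det(A) = ( m(n−1, 1) · m(n, n) − m(n−1, n) · m(n, 1) ) / α. That is, crossing out the top n−2 rows and the middle n−2 columns of A, forming the 2×2 matrix of unsigned minors of A at the four remaining positions (rows n−1, n and columns 1, n), taking its determinant, and dividing by α yields det(A). -/

import Mathlib

/-- The contiguous `k × k` submatrix of `A` whose upper-left corner is the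
(0-based) entry `(i, j)`. -/
def block {K : Type*} [Field K] {n : ℕ} (A : Matrix (Fin n) (Fin n) K)
    (i j k : ℕ) (hi : i + k ≤ n) (hj : j + k ≤ n) : Matrix (Fin k) (Fin k) K :=
  Matrix.of fun r c => A ⟨i + r.1, by omega⟩ ⟨j + c.1, by omega⟩

/-- `skip a x` is the `x`-th natural number (in increasing order) different from `a`. -/
def skip (a x : ℕ) : ℕ := if x < a then x else x + 1

theorem skip_le (a x : ℕ) : skip a x ≤ x + 1 := by unfold skip; split <;> omega

/-- The `(i, j)` minor of `A`: the determinant of the `(n-1) × (n-1)` submatrix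
obtained from `A` by deleting row `i` and column `j` (no sign attached). -/
def dmMinor {K : Type*} [Field K] {n : ℕ} (A : Matrix (Fin n) (Fin n) K)
    (i j : Fin n) : K :=
  (Matrix.of fun r c : Fin (n - 1) =>
    A ⟨skip i.1 r.1, by have := skip_le i.1 r.1; omega⟩
      ⟨skip j.1 c.1, by have := skip_le j.1 c.1; omega⟩).det

open Matrix Polynomial

/-- The interior block: rows `0..m`, columns `1..m+1` of an `(m+3)×(m+3)` matrix. -/
def inner2 {R : Type*} [CommRing R] {m : ℕ} (A : Matrix (Fin (m+3)) (Fin (m+3)) R) :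
    Matrix (Fin (m+1)) (Fin (m+1)) R :=
  Matrix.of fun r c => A ⟨r.1, by omega⟩ ⟨c.1 + 1, by omega⟩

private lemma updateColumn_comm' {R : Type*} [CommRing R] {n : Type*} [DecidableEq n]
    [Fintype n] (A : Matrix n n R) {i j : n} (hij : i ≠ j) (u v : n → R) :
    (A.updateCol i u).updateCol j v = (A.updateCol j v).updateCol i u := by
  ext r c
  simp only [updateCol_apply]
  rcases eq_or_ne c i with rfl | hci <;> rcases eq_or_ne c j with rfl | hcj <;> simp_all

set_option maxHeartbeats 1000000 in
private lemma detF_eq {R : Type*} [CommRing R] {m : ℕ}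
    (A : Matrix (Fin (m+3)) (Fin (m+3)) R) :
    ((A.updateCol 0 (Pi.single (⟨m+1, by omega⟩ : Fin (m+3)) 1)).updateCol
        ⟨m+2, by omega⟩ (Pi.single (⟨m+2, by omega⟩ : Fin (m+3)) 1)).det
      = (-1)^(m+1) * (inner2 A).det := by
  set q1 : Fin (m+3) := ⟨m+1, by omega⟩ with hq1
  set i2 : Fin (m+3) := ⟨m+2, by omega⟩ with hi2
  set F := (A.updateCol 0 (Pi.single q1 1)).updateCol i2 (Pi.single i2 1) with hF
  have hlast : i2 = Fin.last (m+2) := rfl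
  rw [det_succ_column F i2]
  rw [Finset.sum_eq_single i2]
  · have hF22 : F i2 i2 = 1 := by simp [hF, updateCol_apply]
    rw [hF22]
    have hsign : ((-1 : R))^((i2 : ℕ) + (i2 : ℕ)) = 1 := Even.neg_one_pow ⟨i2.1, by ring⟩
    rw [hsign, one_mul, one_mul]
    have hG : F.submatrix i2.succAbove i2.succAbove =
        (Matrix.of fun r c : Fin (m+2) =>
          if c = 0 then (if r = Fin.last (m+1) then (1:R) else 0)
          else A ⟨r.1, by omega⟩ ⟨c.1, by omega⟩) := by
      ext r c
      simp only [submatrix_apply, hlast, Fin.succAbove_last, hF, updateCol_apply,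
        Matrix.of_apply]
      have hrne : r.castSucc ≠ Fin.last (m+2) := (Fin.castSucc_lt_last r).ne
      have hcne : c.castSucc ≠ Fin.last (m+2) := (Fin.castSucc_lt_last c).ne
      rw [if_neg (hlast ▸ hcne)]
      rcases eq_or_ne c 0 with rfl | hc0
      · have : (Fin.castSucc (0 : Fin (m+2))) = (0 : Fin (m+3)) := rfl
        rw [if_pos this, if_pos rfl]
        have : r.castSucc = q1 ↔ r = Fin.last (m+1) := by
          rw [Fin.ext_iff, Fin.ext_iff]; simp [hq1]
        simp [Pi.single_apply, this]
      · have : (Fin.castSucc c) ≠ (0 : Fin (m+3)) := by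
          exact fun h => hc0 (Fin.ext (by have h' := congrArg Fin.val h; exact h'))
        rw [if_neg this, if_neg hc0]
        rfl
    rw [hG, det_succ_column_zero]
    rw [Finset.sum_eq_single (Fin.last (m+1))]
    · have h1 : ((Fin.last (m+1) : Fin (m+2)) : ℕ) = m + 1 := rfl
      simp only [Matrix.of_apply, if_pos rfl, if_pos (rfl : (0:Fin (m+2)) = 0), mul_one, h1,
        if_true, eq_self_iff_true]
      refine congrArg₂ _ rfl (congrArg _ ?_)
      ext r c
      simp only [submatrix_apply, Fin.succAbove_last, Matrix.of_apply, inner2]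
      rw [if_neg (Fin.succ_ne_zero c)]
      rfl
    · intro i _ hne
      simp [hne]
    · intro h; exact absurd (Finset.mem_univ _) h
  · intro i _ hne
    have : F i i2 = 0 := by
      simp [hF, updateCol_apply, Pi.single_apply, hne]
    rw [this]; ring
  · intro h; exact absurd (Finset.mem_univ _) h

private lemma key_domain {R : Type*} [CommRing R] [IsDomain R] {m : ℕ}
    (A : Matrix (Fin (m+3)) (Fin (m+3)) R) (hA : A.det ≠ 0) :
    adjugate A 0 ⟨m+1, by omega⟩ * adjugate A ⟨m+2, by omega⟩ ⟨m+2, by omega⟩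
      - adjugate A 0 ⟨m+2, by omega⟩ * adjugate A ⟨m+2, by omega⟩ ⟨m+1, by omega⟩
    = (-1)^(m+1) * (A.det * (inner2 A).det) := by
  set i2 : Fin (m+3) := ⟨m+2, by omega⟩ with hi2
  set q1 : Fin (m+3) := ⟨m+1, by omega⟩ with hq1
  have h20 : i2 ≠ 0 := by simp [hi2, Fin.ext_iff]
  set U : Matrix (Fin (m+3)) (Fin 2) R := Matrix.of fun k t =>
    if t = 0 then adjugate A k q1 - (if k = 0 then 1 else 0)
    else adjugate A k i2 - (if k = i2 then 1 else 0) with hU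
  set V : Matrix (Fin 2) (Fin (m+3)) R := Matrix.of fun t j =>
    if t = 0 then (if j = 0 then 1 else 0) else (if j = i2 then 1 else 0) with hV
  have hD : (1 + U * V : Matrix _ _ R) = Matrix.of fun k j =>
      if j = 0 then adjugate A k q1 else if j = i2 then adjugate A k i2
      else if k = j then 1 else 0 := by
    ext k j
    simp only [Matrix.add_apply, Matrix.mul_apply, Fin.sum_univ_two, hU, hV, Matrix.of_apply,
      Matrix.one_apply]
    split_ifs <;> simp_all
  -- A * D is A with two columns replaced by det A times basis vectors
  have hAD : A * (1 + U * V) =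
      (A.updateCol 0 (A.det • (Pi.single q1 1 : Fin (m+3) → R))).updateCol i2
        (A.det • (Pi.single i2 1 : Fin (m+3) → R)) := by
    rw [hD]
    ext i j
    rw [Matrix.mul_apply]
    rcases eq_or_ne j 0 with rfl | hj0
    · have : ∀ k, A i k * (Matrix.of fun k j =>
          if j = 0 then adjugate A k q1 else if j = i2 then adjugate A k i2
          else if k = j then 1 else 0) k 0 = A i k * adjugate A k q1 := by
        intro k; simp
      rw [Finset.sum_congr rfl fun k _ => this k, ← Matrix.mul_apply, mul_adjugate]
      simp [updateCol_apply, h20.symm, Pi.single_apply, Matrix.one_apply]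
    · rcases eq_or_ne j i2 with h | hj2
      · subst h
        have : ∀ k, A i k * (Matrix.of fun k j' =>
            if j' = 0 then adjugate A k q1 else if j' = i2 then adjugate A k i2
            else if k = j' then 1 else 0) k i2 = A i k * adjugate A k i2 := by
          intro k; simp [h20]
        rw [Finset.sum_congr rfl fun k _ => this k, ← Matrix.mul_apply, mul_adjugate]
        simp [updateCol_apply, Pi.single_apply, Matrix.one_apply]
      · simp only [Matrix.of_apply, if_neg hj0, if_neg hj2, updateCol_apply,
          if_neg hj2, if_neg hj0, mul_ite, mul_one, mul_zero]
        simp [Finset.sum_ite_eq' Finset.univ j (fun k => A i k)]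
  -- determinant of the right-hand side
  have h02 : (0 : Fin (m+3)) ≠ i2 := h20.symm
  have hdetE : ((A.updateCol 0 (A.det • (Pi.single q1 1 : Fin (m+3) → R))).updateCol i2
        (A.det • (Pi.single i2 1 : Fin (m+3) → R))).det
      = A.det * (A.det * ((-1)^(m+1) * (inner2 A).det)) := by
    rw [det_updateCol_smul,
      updateColumn_comm' _ h02,
      det_updateCol_smul,
      updateColumn_comm' _ h02.symm,
      detF_eq]
  -- determinant of 1 + U * V
  have hdetD : (1 + U * V).det = adjugate A 0 q1 * adjugate A i2 i2
      - adjugate A 0 i2 * adjugate A i2 q1 := by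
    rw [Matrix.det_one_add_mul_comm]
    have h1 : (1 + V * U : Matrix (Fin 2) (Fin 2) R) = !![adjugate A 0 q1, adjugate A 0 i2;
        adjugate A i2 q1, adjugate A i2 i2] := by
      ext t j
      simp only [Matrix.add_apply, Matrix.mul_apply, hU, hV, Matrix.of_apply, Matrix.one_apply]
      fin_cases t <;> fin_cases j <;>
        simp [Finset.sum_ite_eq', h20, h20.symm]
    rw [h1, Matrix.det_fin_two_of]
  have hcancel : (1 + U * V).det = A.det * ((-1)^(m+1) * (inner2 A).det) := by
    apply mul_left_cancel₀ hA
    rw [← det_mul, hAD, hdetE]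
  rw [hdetD] at hcancel
  linear_combination hcancel

private lemma key_field {K : Type*} [Field K] {m : ℕ}
    (A : Matrix (Fin (m+3)) (Fin (m+3)) K) :
    adjugate A 0 ⟨m+1, by omega⟩ * adjugate A ⟨m+2, by omega⟩ ⟨m+2, by omega⟩
      - adjugate A 0 ⟨m+2, by omega⟩ * adjugate A ⟨m+2, by omega⟩ ⟨m+1, by omega⟩
    = (-1)^(m+1) * (A.det * (inner2 A).det) := by
  classical
  set Ap : Matrix (Fin (m+3)) (Fin (m+3)) K[X] := charmatrix (-A) with hAp
  have hdet : Ap.det ≠ 0 := by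
    have : Ap.det = (-A).charpoly := rfl
    rw [this]; exact (charpoly_monic _).ne_zero
  have hk := key_domain Ap hdet
  set φ : K[X] →+* K := Polynomial.evalRingHom (0 : K) with hφ
  have hmapA : Ap.map φ = A := by
    ext i j
    rcases eq_or_ne i j with rfl | h
    · simp [hAp, charmatrix_apply_eq, hφ]
    · simp [hAp, charmatrix_apply_ne _ _ _ h, hφ]
  have hadj : ∀ a b, φ (adjugate Ap a b) = adjugate A a b := by
    intro a b
    have h1 : φ.mapMatrix (adjugate Ap) = adjugate (φ.mapMatrix Ap) := RingHom.map_adjugate φ Ap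
    calc φ (adjugate Ap a b) = (φ.mapMatrix (adjugate Ap)) a b := rfl
      _ = (adjugate (φ.mapMatrix Ap)) a b := by rw [h1]
      _ = adjugate A a b := by rw [RingHom.mapMatrix_apply, hmapA]
  have hdetmap : φ Ap.det = A.det := by
    rw [RingHom.map_det, RingHom.mapMatrix_apply, hmapA]
  have hinner : φ ((inner2 Ap).det) = (inner2 A).det := by
    rw [RingHom.map_det]
    congr 1
    rw [RingHom.mapMatrix_apply]
    ext r c
    have : (inner2 Ap).map φ r c = (Ap.map φ) ⟨r.1, by omega⟩ ⟨c.1 + 1, by omega⟩ := rfl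
    rw [this, hmapA]
    rfl
  have h := congrArg φ hk
  simp only [map_sub, _root_.map_mul, map_pow, map_neg, _root_.map_one, hadj, hdetmap, hinner] at h
  exact h

private lemma adj_eq_dmMinor {K : Type*} [Field K] {m : ℕ}
    (A : Matrix (Fin (m+3)) (Fin (m+3)) K) (i j : Fin (m+3)) :
    adjugate A i j = (-1)^(j.1 + i.1) * dmMinor A j i := by
  rw [adjugate_fin_succ_eq_det_submatrix]
  congr 1
  unfold dmMinor
  congr 1
  ext r c
  simp only [submatrix_apply, Matrix.of_apply]
  have hs : ∀ (a : Fin (m+3)) (x : Fin (m+2)), (a.succAbove x).1 = skip a.1 x.1 := by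
    intro a x
    simp only [Fin.succAbove, skip, apply_ite Fin.val, Fin.lt_def, Fin.coe_castSucc,
      Fin.val_succ]
  congr 1
  · exact Fin.ext (hs j r)
  · exact Fin.ext (hs i c)

/-- **Double-crossing method, special case.**  Let `A` be `n × n` over a field,
`n ≥ 3`, and suppose the "double-crossed" contiguous minor
`α = det A_{1..n−2, 2..n−1}` (1-based; 0-based this is the `(n−2) × (n−2)`
block with upper-left corner `(0, 1)`) is nonzero.  With `m(r, c)` the `(r, c)`
minor of `A` (1-based; 0-based the relevant rows are `n−2, n−1` and columns
`0, n−1`),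
`det A = (m(n−1,1)·m(n,n) − m(n−1,n)·m(n,1)) / α`. -/
theorem double_crossing_special_case {K : Type*} [Field K] {n : ℕ} (hn : 3 ≤ n)
    (A : Matrix (Fin n) (Fin n) K)
    (hα : (block A 0 1 (n - 2) (by omega) (by omega)).det ≠ 0) :
    A.det = (dmMinor A ⟨n - 2, by omega⟩ ⟨0, by omega⟩
               * dmMinor A ⟨n - 1, by omega⟩ ⟨n - 1, by omega⟩
             - dmMinor A ⟨n - 2, by omega⟩ ⟨n - 1, by omega⟩
               * dmMinor A ⟨n - 1, by omega⟩ ⟨0, by omega⟩)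
            / (block A 0 1 (n - 2) (by omega) (by omega)).det := by
  obtain ⟨m, rfl⟩ : ∃ m, n = m + 3 := ⟨n - 3, by omega⟩
  have hb : (block A 0 1 (m + 3 - 2) (by omega) (by omega)).det = (inner2 A).det := by
    congr 1
    ext r c
    simp only [block, inner2, Matrix.of_apply]
    congr 1
    · exact Fin.ext (by simp)
    · exact Fin.ext (by simp [Nat.add_comm])
  rw [hb] at hα ⊢
  rw [eq_div_iff hα]
  have hk := key_field A
  rw [adj_eq_dmMinor, adj_eq_dmMinor, adj_eq_dmMinor, adj_eq_dmMinor] at hk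
  have e1 : ((-1:K))^((⟨m+2, by omega⟩ : Fin (m+3)).1 + (⟨m+2, by omega⟩ : Fin (m+3)).1) = 1 :=
    Even.neg_one_pow ⟨m+2, by ring⟩
  have e2 : ((-1:K))^((⟨m+1, by omega⟩ : Fin (m+3)).1 + (⟨m+2, by omega⟩ : Fin (m+3)).1) = -1 :=
    Odd.neg_one_pow ⟨m+1, by ring⟩
  have e3 : ((-1:K))^((⟨m+2, by omega⟩ : Fin (m+3)).1 + ((0 : Fin (m+3))).1)
      = (-1)^(m+1) * (-1) := by
    rw [show (⟨m+2, by omega⟩ : Fin (m+3)).1 + ((0 : Fin (m+3))).1 = (m+1) + 1 by simp,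
      pow_succ]
  have e4 : ((-1:K))^((⟨m+1, by omega⟩ : Fin (m+3)).1 + ((0 : Fin (m+3))).1) = (-1)^(m+1) := by
    rw [show (⟨m+1, by omega⟩ : Fin (m+3)).1 + ((0 : Fin (m+3))).1 = m+1 by simp]
  rw [e1, e2, e3, e4] at hk
  set s : K := (-1)^(m+1) with hsdef
  have hsne : s ≠ 0 := pow_ne_zero _ (by norm_num)
  have h0 : (⟨0, by omega⟩ : Fin (m+3)) = (0 : Fin (m+3)) := by
    exact Fin.ext (by simp)
  rw [show (⟨m+3-2, by omega⟩ : Fin (m+3)) = (⟨m+1, by omega⟩ : Fin (m+3)) from rfl,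
    show (⟨m+3-1, by omega⟩ : Fin (m+3)) = (⟨m+2, by omega⟩ : Fin (m+3)) from rfl, h0]
  have hk2 : s * (dmMinor A ⟨m+1, by omega⟩ 0 * dmMinor A ⟨m+2, by omega⟩ ⟨m+2, by omega⟩
      - dmMinor A ⟨m+1, by omega⟩ ⟨m+2, by omega⟩ * dmMinor A ⟨m+2, by omega⟩ 0)
      = s * (A.det * (inner2 A).det) := by
    linear_combination hk
  exact (mul_left_cancel₀ hsne hk2).symm
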